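/- Let S be the n×m block matrix S = [S₁ S₂; I_{m−k} 0; 0 I_k], where S₁ is (n−m)×(m−k) and S₂ is (n−m)×k. Let Ŝ₁ = [S₁; I_{m−k}] (an (n−k)×(m−k) matrix) and let W_ν be an (n−k)×(n−k) symmetric positive definite matrix. Define Ĝ₁ = (Ŝ₁ᵀ W_ν⁻¹ Ŝ₁)⁻¹ Ŝ₁ᵀ W_ν⁻¹ and Ĝ = [Ĝ₁ 0_{(m−k)×k}; 0_{k×(n−k)} I_k] · (I_n − [0 S₂; 0 0]), where the zero-padded block [0 S₂; 0 0] has S₂ occupying the top-right (n−m)×k block. Then Ĝ S = I_m. -/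

import Mathlib

open Matrix

lemma gram_posDef {n m : Type*} [Fintype n] [Fintype m] [DecidableEq n] [DecidableEq m]
    {W : Matrix n n ℝ} (hW : W.PosDef) (A : Matrix n m ℝ)
    (hA : ∀ x, A *ᵥ x = 0 → x = 0) : (Aᵀ * W * A).PosDef := by
  rw [posDef_iff_dotProduct_mulVec]
  constructor
  · have h := isHermitian_conjTranspose_mul_mul A hW.isHermitian
    rwa [conjTranspose_eq_transpose_of_trivial] at h
  · intro x hx
    have hAx : A *ᵥ x ≠ 0 := fun h => hx (hA x h)
    have h := hW.dotProduct_mulVec_pos hAx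
    rw [star_trivial] at h ⊢
    rw [← Matrix.mulVec_mulVec, ← Matrix.mulVec_mulVec, Matrix.dotProduct_mulVec,
      Matrix.vecMul_transpose]
    exact h

/-- Immutable-forecast reconciliation matrix satisfies `Ĝ S = I`.
Here rows of the hierarchy are indexed by `(Fin p ⊕ Fin q) ⊕ Fin k` where
`p = n − m` (determined series), `q = m − k` (mutable basis series), `k` (immutable series),
and the basis (columns of `S`) by `Fin q ⊕ Fin k`. -/
theorem stmt2 {p q k : ℕ}
    (S₁ : Matrix (Fin p) (Fin q) ℝ) (S₂ : Matrix (Fin p) (Fin k) ℝ)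
    (Wν : Matrix (Fin p ⊕ Fin q) (Fin p ⊕ Fin q) ℝ) (hWν : Wν.PosDef) :
    let S : Matrix ((Fin p ⊕ Fin q) ⊕ Fin k) (Fin q ⊕ Fin k) ℝ :=
      fromBlocks (fromRows S₁ 1) (fromRows S₂ 0) 0 1
    let Sc₁ : Matrix (Fin p ⊕ Fin q) (Fin q) ℝ := fromRows S₁ 1
    let G₁ : Matrix (Fin q) (Fin p ⊕ Fin q) ℝ :=
      (Sc₁ᵀ * Wν⁻¹ * Sc₁)⁻¹ * Sc₁ᵀ * Wν⁻¹
    let P : Matrix ((Fin p ⊕ Fin q) ⊕ Fin k) ((Fin p ⊕ Fin q) ⊕ Fin k) ℝ :=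
      fromBlocks 0 (fromRows S₂ 0) 0 0
    let G : Matrix (Fin q ⊕ Fin k) ((Fin p ⊕ Fin q) ⊕ Fin k) ℝ :=
      fromBlocks G₁ 0 0 1 * (1 - P)
    G * S = 1 := by
  intro S Sc₁ G₁ P G
  have hM : ((fromRows S₁ 1 : Matrix (Fin p ⊕ Fin q) (Fin q) ℝ)ᵀ * Wν⁻¹ *
      fromRows S₁ 1).PosDef := by
    refine gram_posDef hWν.inv _ (fun x hx => ?_)
    funext j
    have := congrFun hx (Sum.inr j)
    simpa [Matrix.fromRows_mulVec] using this
  have hG₁ : G₁ * Sc₁ = 1 := by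
    show ((fromRows S₁ 1)ᵀ * Wν⁻¹ * fromRows S₁ 1)⁻¹ * (fromRows S₁ 1)ᵀ * Wν⁻¹ *
      fromRows S₁ 1 = 1
    rw [Matrix.mul_assoc, Matrix.mul_assoc, ← Matrix.mul_assoc ((fromRows S₁ 1)ᵀ)]
    exact Matrix.nonsing_inv_mul _ ((Matrix.isUnit_iff_isUnit_det _).mp hM.isUnit)
  have h1 : (1 - P) * S = fromBlocks Sc₁ 0 0 1 := by
    show (1 - P) * fromBlocks (fromRows S₁ 1) (fromRows S₂ 0) 0 1 = _
    rw [Matrix.sub_mul, Matrix.one_mul]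
    show fromBlocks (fromRows S₁ 1) (fromRows S₂ 0) 0 1 -
      fromBlocks 0 (fromRows S₂ 0) 0 0 * fromBlocks (fromRows S₁ 1) (fromRows S₂ 0) 0 1 = _
    rw [Matrix.fromBlocks_multiply]
    ext (i | i) (j | j) <;> simp [Matrix.fromBlocks, Sc₁]
  refine (Matrix.mul_assoc (fromBlocks G₁ 0 0 1) (1 - P) S).trans ?_
  rw [h1, Matrix.fromBlocks_multiply]
  simp [hG₁, ← fromBlocks_one]
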